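/- Let r be a divisor of m (so 𝔽_{q^r} is a subfield of 𝔽_{q^m}), let s ≥ 1, and let 𝒢 be a subgroup of GL(k, 𝔽_{q^m}) that acts transitively on the one-dimensional 𝔽_{q^m}-subspaces of 𝔽_{q^m}^k via v ↦ vA. Let 𝒪 be an orbit of the induced action of 𝒢 on the set of s-dimensional 𝔽_{q^r}-subspaces of 𝔽_{q^m}^k (where A sends U to U·A = {uA : u ∈ U}). Then for any two nonzero v₁, v₂ ∈ 𝔽_{q^m}^k there exists a bijection π : 𝒪 → 𝒪 such that dim_{𝔽_q}(π(U) ∩ v₁^⊥) = dim_{𝔽_q}(U ∩ v₂^⊥) for every U ∈ 𝒪. Consequently, the multiset of intersection dimensions {dim_{𝔽_q}(U ∩ H) : U ∈ 𝒪} is the same for every 𝔽_{q^m}-hyperplane H, i.e., every sum-rank metric code associated with the system formed by the members of 𝒪 has constant rank-profile. -/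

import Mathlib

/-- The dot-product functional `w ↦ ∑ j, v j * w j`. -/
noncomputable def dotL (Fqm : Type) [Field Fqm] {k : ℕ} (v : Fin k → Fqm) :
    (Fin k → Fqm) →ₗ[Fqm] Fqm where
  toFun w := ∑ j, v j * w j
  map_add' x y := by simp [mul_add, Finset.sum_add_distrib]
  map_smul' c x := by
    simp only [Pi.smul_apply, smul_eq_mul, RingHom.id_apply, Finset.mul_sum]
    exact Finset.sum_congr rfl fun j _ => by ring

/-- `v^⊥ = {w : Fqm^k | ∑ j, v j * w j = 0}` regarded as an `Fq`-subspace of `Fqm^k`. -/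
noncomputable def perpQ (Fq Fqm : Type) [Field Fq] [Field Fqm] [Algebra Fq Fqm]
    {k : ℕ} (v : Fin k → Fqm) : Submodule Fq (Fin k → Fqm) :=
  Submodule.restrictScalars Fq (LinearMap.ker (dotL Fqm v))

section Helpers
set_option linter.unusedSectionVars false
open Matrix MulAction

variable {F : Type} [Field F] [Fintype F] {k : ℕ}

lemma card_ker_transpose (N : Matrix (Fin k) (Fin k) F) :
    Nat.card ↥(LinearMap.ker Nᵀ.mulVecLin) = Nat.card ↥(LinearMap.ker N.mulVecLin) := by
  have hfr : Module.finrank F (LinearMap.ker Nᵀ.mulVecLin) = Module.finrank F (LinearMap.ker N.mulVecLin) := by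
    have h1 := LinearMap.finrank_range_add_finrank_ker (N.mulVecLin)
    have h2 := LinearMap.finrank_range_add_finrank_ker (Nᵀ.mulVecLin)
    have h3 : Nᵀ.rank = N.rank := Matrix.rank_transpose N
    unfold Matrix.rank at h3
    omega
  obtain ⟨e⟩ := FiniteDimensional.nonempty_linearEquiv_of_finrank_eq hfr
  exact Nat.card_congr e.toEquiv

def RowVec (k : ℕ) (F : Type) : Type := Fin k → F
def ColVec (k : ℕ) (F : Type) : Type := Fin k → F

instance : Fintype (RowVec k F) := inferInstanceAs (Fintype (Fin k → F))
instance : Fintype (ColVec k F) := inferInstanceAs (Fintype (Fin k → F))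

variable (G : Subgroup (Matrix.GeneralLinearGroup (Fin k) F))

instance rowSMul : SMul (Fˣ × ↥G) (RowVec k F) :=
  ⟨fun h v => (h.1 : F) • Matrix.vecMul (v : Fin k → F) ((((h.2)⁻¹ : ↥G) : Matrix.GeneralLinearGroup (Fin k) F) : Matrix (Fin k) (Fin k) F)⟩

lemma rowSMul_def (h : Fˣ × ↥G) (v : RowVec k F) :
    h • v = (h.1 : F) • Matrix.vecMul (v : Fin k → F) ((((h.2)⁻¹ : ↥G) : Matrix.GeneralLinearGroup (Fin k) F) : Matrix (Fin k) (Fin k) F) := rfl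

instance rowAction : MulAction (Fˣ × ↥G) (RowVec k F) where
  one_smul v := by
    rw [rowSMul_def]
    simp only [Prod.fst_one, Units.val_one, Prod.snd_one, inv_one, OneMemClass.coe_one,
      Matrix.GeneralLinearGroup.coe_one, Matrix.vecMul_one, one_smul]
    exact Matrix.vecMul_one (v : Fin k → F)
  mul_smul a b v := by
    rw [rowSMul_def, rowSMul_def, rowSMul_def]
    simp only [Prod.fst_mul, Units.val_mul, Prod.snd_mul, _root_.mul_inv_rev, InvMemClass.coe_inv, Subgroup.coe_mul,
      Matrix.GeneralLinearGroup.coe_mul, Matrix.vecMul_vecMul, Matrix.vecMul_smul, mul_smul]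
    rw [Matrix.smul_vecMul]
    exact congrArg _ (congrArg _ (Matrix.vecMul_vecMul (v : Fin k → F) _ _).symm)

instance colSMul : SMul (Fˣ × ↥G) (ColVec k F) :=
  ⟨fun h v => (h.1 : F) • Matrix.mulVec (((h.2 : Matrix.GeneralLinearGroup (Fin k) F)) : Matrix (Fin k) (Fin k) F) (v : Fin k → F)⟩

lemma colSMul_def (h : Fˣ × ↥G) (v : ColVec k F) :
    h • v = (h.1 : F) • Matrix.mulVec (((h.2 : Matrix.GeneralLinearGroup (Fin k) F)) : Matrix (Fin k) (Fin k) F) (v : Fin k → F) := rfl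

instance colAction : MulAction (Fˣ × ↥G) (ColVec k F) where
  one_smul v := by
    rw [colSMul_def]
    simp only [Prod.fst_one, Units.val_one, Prod.snd_one, OneMemClass.coe_one,
      Matrix.GeneralLinearGroup.coe_one, Matrix.one_mulVec, one_smul]
    exact Matrix.one_mulVec (v : Fin k → F)
  mul_smul a b v := by
    rw [colSMul_def, colSMul_def, colSMul_def]
    simp only [Prod.fst_mul, Units.val_mul, Prod.snd_mul, Subgroup.coe_mul,
      Matrix.GeneralLinearGroup.coe_mul, Matrix.mulVec_mulVec, Matrix.mulVec_smul, mul_smul]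
    exact congrArg _ (congrArg _ (Matrix.mulVec_mulVec (v : Fin k → F) _ _).symm)

-- helper iff lemmas
lemma row_fix_iff (lam : F) (B : Matrix (Fin k) (Fin k) F) (v : Fin k → F) :
    lam • Matrix.vecMul v B = v ↔ (lam • B - 1)ᵀ.mulVec v = 0 := by
  rw [Matrix.transpose_sub, Matrix.sub_mulVec, Matrix.transpose_smul,
    Matrix.smul_mulVec, Matrix.transpose_one, Matrix.one_mulVec, sub_eq_zero,
    Matrix.mulVec_transpose]

lemma col_fix_iff (lam : F) (B : Matrix (Fin k) (Fin k) F) (v : Fin k → F) :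
    lam • Matrix.mulVec B v = v ↔ (lam • B - 1).mulVec v = 0 := by
  rw [Matrix.sub_mulVec, Matrix.smul_mulVec, Matrix.one_mulVec, sub_eq_zero]

lemma card_fix_row_col (h : Fˣ × ↥G) :
    Nat.card (MulAction.fixedBy (RowVec k F) h) =
    Nat.card (MulAction.fixedBy (ColVec k F) (h.1, h.2⁻¹)) := by
  set B : Matrix (Fin k) (Fin k) F := (((h.2⁻¹ : ↥G) : Matrix.GeneralLinearGroup (Fin k) F) : Matrix (Fin k) (Fin k) F) with hB
  set N : Matrix (Fin k) (Fin k) F := (h.1 : F) • B - 1 with hN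
  have e1 : (MulAction.fixedBy (RowVec k F) h) ≃ ↥(LinearMap.ker Nᵀ.mulVecLin) := by
    refine ⟨fun x => ⟨x.1, ?_⟩, fun x => ⟨x.1, ?_⟩, fun x => rfl, fun x => rfl⟩
    · have hx : h • x.1 = x.1 := x.2
      rw [rowSMul_def] at hx
      exact LinearMap.mem_ker.2 ((row_fix_iff _ _ _).1 hx)
    · have := (row_fix_iff ((h.1 : F)) B x.1).2 (LinearMap.mem_ker.1 x.2)
      show h • _ = _
      refine (rowSMul_def G h x.1).trans ?_
      exact this
  have e2 : (MulAction.fixedBy (ColVec k F) (h.1, h.2⁻¹)) ≃ ↥(LinearMap.ker N.mulVecLin) := by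
    refine ⟨fun x => ⟨x.1, ?_⟩, fun x => ⟨x.1, ?_⟩, fun x => rfl, fun x => rfl⟩
    · have hx : (h.1, h.2⁻¹) • x.1 = x.1 := x.2
      rw [colSMul_def] at hx
      exact LinearMap.mem_ker.2 ((col_fix_iff _ _ _).1 hx)
    · have := (col_fix_iff ((h.1 : F)) B x.1).2 (LinearMap.mem_ker.1 x.2)
      show (h.1, h.2⁻¹) • _ = _
      refine (colSMul_def G (h.1, h.2⁻¹) x.1).trans ?_
      exact this
  rw [Nat.card_congr e1, Nat.card_congr e2, card_ker_transpose]

instance : Zero (RowVec k F) := inferInstanceAs (Zero (Fin k → F))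
instance : Zero (ColVec k F) := inferInstanceAs (Zero (Fin k → F))

def toRow : (Fin k → F) → RowVec k F := fun v => v
def toCol : (Fin k → F) → ColVec k F := fun v => v

lemma smul_zero_row (h : Fˣ × ↥G) : h • (0 : RowVec k F) = 0 := by
  rw [rowSMul_def]
  show (h.1 : F) • Matrix.vecMul (0 : Fin k → F) _ = (0 : Fin k → F)
  rw [Matrix.zero_vecMul, smul_zero]

lemma smul_zero_col (h : Fˣ × ↥G) : h • (0 : ColVec k F) = 0 := by
  rw [colSMul_def]
  show (h.1 : F) • Matrix.mulVec _ (0 : Fin k → F) = (0 : Fin k → F)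
  rw [Matrix.mulVec_zero, smul_zero]

lemma col_transitive (hk : 1 ≤ k)
    (htrans : ∀ v w : Fin k → F, v ≠ 0 → w ≠ 0 →
      ∃ A ∈ G, ∃ lam : F, lam ≠ 0 ∧ Matrix.vecMul v ((A : Matrix (Fin k) (Fin k) F)) = lam • w)
    (v w : Fin k → F) (hv : v ≠ 0) (hw : w ≠ 0) :
    ∃ A ∈ G, ∃ lam : F, lam ≠ 0 ∧ Matrix.mulVec ((A : Matrix (Fin k) (Fin k) F)) v = lam • w := by
  classical
  letI : Fintype ↥G := Fintype.ofFinite _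
  -- row transitivity as an action statement
  have hrowtrans : ∀ x y : Fin k → F, x ≠ 0 → y ≠ 0 →
      ∃ h : Fˣ × ↥G, h • (toRow (k := k) (F := F) x) = toRow y := by
    intro x y hx hy
    obtain ⟨A, hA, lam, hlam, heq⟩ := htrans x y hx hy
    refine ⟨((Units.mk0 lam hlam)⁻¹, (⟨A, hA⟩ : ↥G)⁻¹), ?_⟩
    rw [rowSMul_def]
    show ((Units.mk0 lam hlam)⁻¹ : Fˣ).val • Matrix.vecMul x
      ((((⟨A, hA⟩ : ↥G)⁻¹⁻¹ : ↥G) : Matrix.GeneralLinearGroup (Fin k) F) : Matrix (Fin k) (Fin k) F) = y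
    rw [inv_inv]
    show ((Units.mk0 lam hlam)⁻¹ : Fˣ).val • Matrix.vecMul x (A : Matrix (Fin k) (Fin k) F) = y
    rw [heq, smul_smul, Units.val_inv_eq_inv_val, Units.val_mk0, inv_mul_cancel₀ hlam, one_smul]
  -- Burnside sums
  haveI : ∀ a : Fˣ × ↥G, Fintype (MulAction.fixedBy (RowVec k F) a) := fun a => Fintype.ofFinite _
  haveI : ∀ a : Fˣ × ↥G, Fintype (MulAction.fixedBy (ColVec k F) a) := fun a => Fintype.ofFinite _
  letI : Fintype (MulAction.orbitRel.Quotient (Fˣ × ↥G) (RowVec k F)) := Fintype.ofFinite _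
  letI : Fintype (MulAction.orbitRel.Quotient (Fˣ × ↥G) (ColVec k F)) := Fintype.ofFinite _
  have hrowB := MulAction.sum_card_fixedBy_eq_card_orbits_mul_card_group (Fˣ × ↥G) (RowVec k F)
  have hcolB := MulAction.sum_card_fixedBy_eq_card_orbits_mul_card_group (Fˣ × ↥G) (ColVec k F)
  have hsum : (∑ a : Fˣ × ↥G, Fintype.card (MulAction.fixedBy (RowVec k F) a))
      = ∑ a : Fˣ × ↥G, Fintype.card (MulAction.fixedBy (ColVec k F) a) := by
    refine Fintype.sum_equiv (Equiv.prodCongr (Equiv.refl Fˣ) (Equiv.inv ↥G)) _ _ ?_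
    intro h
    have := card_fix_row_col G h
    simpa [Nat.card_eq_fintype_card, Prod.map] using this
  have hcards : Nat.card (MulAction.orbitRel.Quotient (Fˣ × ↥G) (ColVec k F))
      = Nat.card (MulAction.orbitRel.Quotient (Fˣ × ↥G) (RowVec k F)) := by
    have hpos : 0 < Nat.card (Fˣ × ↥G) := Nat.card_pos
    rw [hsum, hcolB] at hrowB
    simp only [← Nat.card_eq_fintype_card] at hrowB
    exact Nat.eq_of_mul_eq_mul_right hpos hrowB
  -- one nonzero vector
  have hone : (fun _ => (1:F) : Fin k → F) ≠ 0 := by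
    intro hcontra
    have := congrFun hcontra ⟨0, hk⟩
    simpa using this
  -- the row quotient has at most two elements
  have hrow_le : Nat.card (MulAction.orbitRel.Quotient (Fˣ × ↥G) (RowVec k F)) ≤ 2 := by
    have hsurj : Function.Surjective (fun b : Bool =>
        if b then (Quotient.mk'' (toRow (0 : Fin k → F)) :
            MulAction.orbitRel.Quotient (Fˣ × ↥G) (RowVec k F))
          else Quotient.mk'' (toRow (fun _ => (1:F)))) := by
      intro x
      obtain ⟨y, rfl⟩ := Quotient.exists_rep x
      by_cases hy : y = toRow (0 : Fin k → F)
      · exact ⟨true, by simp [hy]⟩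
      · refine ⟨false, ?_⟩
        simp only [if_neg Bool.false_ne_true]
        have : (y : Fin k → F) ≠ 0 := hy
        obtain ⟨h, hh⟩ := hrowtrans y (fun _ => (1:F)) this hone
        exact Quotient.sound' ((MulAction.orbitRel_apply).2 ((MulAction.mem_orbit_iff).2 ⟨h, hh⟩))
    have := Nat.card_le_card_of_surjective _ hsurj
    simpa using this
  -- zero is not in the orbit of a nonzero vector (column action)
  have hzero_ne : ∀ z : Fin k → F, z ≠ 0 →
      (Quotient.mk'' (toCol (0 : Fin k → F)) :
        MulAction.orbitRel.Quotient (Fˣ × ↥G) (ColVec k F)) ≠ Quotient.mk'' (toCol z) := by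
    intro z hz hcontra
    have hr := (MulAction.orbitRel_apply).1 (Quotient.eq''.1 hcontra)
    obtain ⟨h, hh⟩ := (MulAction.mem_orbit_iff).1 hr
    have hh0 : h • toCol z = (0 : ColVec k F) := hh
    have : toCol (k := k) (F := F) z = h⁻¹ • (0 : ColVec k F) := by
      rw [← hh0, inv_smul_smul]
    rw [smul_zero_col] at this
    exact hz this
  -- conclude the two nonzero classes coincide
  have hkey : (Quotient.mk'' (toCol w) :
      MulAction.orbitRel.Quotient (Fˣ × ↥G) (ColVec k F)) = Quotient.mk'' (toCol v) := by
    by_contra hne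
    have h1 := hzero_ne v hv
    have h2 := hzero_ne w hw
    set a := (Quotient.mk'' (toCol (0 : Fin k → F)) :
      MulAction.orbitRel.Quotient (Fˣ × ↥G) (ColVec k F))
    set b := (Quotient.mk'' (toCol w) :
      MulAction.orbitRel.Quotient (Fˣ × ↥G) (ColVec k F))
    set c := (Quotient.mk'' (toCol v) :
      MulAction.orbitRel.Quotient (Fˣ × ↥G) (ColVec k F))
    have hcard3 : ({a, b, c} : Finset _).card = 3 := by
      rw [Finset.card_insert_of_notMem (by
          simp only [Finset.mem_insert, Finset.mem_singleton]
          exact not_or.mpr ⟨h2, h1⟩),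
        Finset.card_insert_of_notMem (by simp only [Finset.mem_singleton]; exact hne),
        Finset.card_singleton]
    have h3 : 3 ≤ Nat.card (MulAction.orbitRel.Quotient (Fˣ × ↥G) (ColVec k F)) := by
      rw [Nat.card_eq_fintype_card, ← hcard3]
      exact Finset.card_le_card (Finset.subset_univ _)
    omega
  -- extract the matrix
  have hr := (MulAction.orbitRel_apply).1 (Quotient.eq''.1 hkey)
  obtain ⟨h, hh⟩ := (MulAction.mem_orbit_iff).1 hr
  rw [colSMul_def] at hh
  refine ⟨(h.2 : Matrix.GeneralLinearGroup (Fin k) F), h.2.2, ((h.1⁻¹ : Fˣ) : F), Units.ne_zero _, ?_⟩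
  have hh' : (h.1 : F) • Matrix.mulVec
      (((h.2 : Matrix.GeneralLinearGroup (Fin k) F)) : Matrix (Fin k) (Fin k) F) v = w := hh
  rw [← hh', smul_smul, Units.val_inv_eq_inv_val, inv_mul_cancel₀ (Units.ne_zero _), one_smul]

lemma dotL_vecMul {F : Type} [Field F] {k : ℕ} (v u : Fin k → F)
    (M : Matrix (Fin k) (Fin k) F) :
    dotL F v (Matrix.vecMul u M) = dotL F (M.mulVec v) u := by
  simp only [dotL, LinearMap.coe_mk, AddHom.coe_mk, Matrix.vecMul, Matrix.mulVec,
    dotProduct, Finset.mul_sum, Finset.sum_mul]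
  rw [Finset.sum_comm]
  exact Finset.sum_congr rfl fun i _ => Finset.sum_congr rfl fun j _ => by ring

lemma dotL_smul_left {F : Type} [Field F] {k : ℕ} (c : F) (v u : Fin k → F) :
    dotL F (c • v) u = c * dotL F v u := by
  simp only [dotL, LinearMap.coe_mk, AddHom.coe_mk, Pi.smul_apply, smul_eq_mul, Finset.mul_sum]
  exact Finset.sum_congr rfl fun j _ => by ring

end Helpers

noncomputable def vecMulEquivFq (Fq : Type) {Fqm : Type} [Field Fq] [Field Fqm] [Algebra Fq Fqm]
    {k : ℕ} (A : Matrix.GeneralLinearGroup (Fin k) Fqm)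
    (h1 : (A : Matrix (Fin k) (Fin k) Fqm) * ((A⁻¹ : Matrix.GeneralLinearGroup (Fin k) Fqm) :
      Matrix (Fin k) (Fin k) Fqm) = 1)
    (h2 : ((A⁻¹ : Matrix.GeneralLinearGroup (Fin k) Fqm) :
      Matrix (Fin k) (Fin k) Fqm) * (A : Matrix (Fin k) (Fin k) Fqm) = 1) :
    (Fin k → Fqm) ≃ₗ[Fq] (Fin k → Fqm) :=
  LinearEquiv.restrictScalars Fq
    ({ Matrix.vecMulLinear (A : Matrix (Fin k) (Fin k) Fqm) with
      invFun := fun x => Matrix.vecMul x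
        ((A⁻¹ : Matrix.GeneralLinearGroup (Fin k) Fqm) : Matrix (Fin k) (Fin k) Fqm)
      left_inv := fun x => by
        simp only [LinearMap.toFun_eq_coe, Matrix.vecMulLinear_apply, Matrix.vecMul_vecMul,
          h1, Matrix.vecMul_one]
      right_inv := fun x => by
        simp only [LinearMap.toFun_eq_coe, Matrix.vecMulLinear_apply, Matrix.vecMul_vecMul,
          h2, Matrix.vecMul_one] } : (Fin k → Fqm) ≃ₗ[Fqm] (Fin k → Fqm))

@[simp] lemma vecMulEquivFq_apply (Fq : Type) {Fqm : Type} [Field Fq] [Field Fqm] [Algebra Fq Fqm]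
    {k : ℕ} (A : Matrix.GeneralLinearGroup (Fin k) Fqm) (h1) (h2) (x : Fin k → Fqm) :
    vecMulEquivFq Fq A h1 h2 x = Matrix.vecMul x (A : Matrix (Fin k) (Fin k) Fqm) := rfl

theorem orbit_constant_rank_profile
    (Fq Fqr Fqm : Type) [Field Fq] [Field Fqr] [Field Fqm]
    [Fintype Fq] [Fintype Fqr] [Fintype Fqm]
    [Algebra Fq Fqr] [Algebra Fqr Fqm] [Algebra Fq Fqm] [IsScalarTower Fq Fqr Fqm]
    (r m s k : ℕ) (hr : Module.finrank Fq Fqr = r) (hm : Module.finrank Fq Fqm = m)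
    (hrm : r ∣ m) (hs : 1 ≤ s) (hk : 1 ≤ k)
    (G : Subgroup (Matrix.GeneralLinearGroup (Fin k) Fqm))
    (htrans : ∀ v w : Fin k → Fqm, v ≠ 0 → w ≠ 0 →
      ∃ A ∈ G, ∃ lam : Fqm, lam ≠ 0 ∧
        Matrix.vecMul v ((A : Matrix (Fin k) (Fin k) Fqm)) = lam • w)
    (O : Set (Submodule Fqr (Fin k → Fqm)))
    (hO : ∃ U₀ : Submodule Fqr (Fin k → Fqm), Module.finrank Fqr U₀ = s ∧
      O = {U | ∃ A ∈ G, U = U₀.map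
        ((Matrix.vecMulLinear ((A : Matrix (Fin k) (Fin k) Fqm))).restrictScalars Fqr)})
    (v₁ v₂ : Fin k → Fqm) (hv₁ : v₁ ≠ 0) (hv₂ : v₂ ≠ 0) :
    ∃ π : O ≃ O, ∀ U : O,
      Module.finrank Fq
          ↥(Submodule.restrictScalars Fq (π U : Submodule Fqr (Fin k → Fqm)) ⊓ perpQ Fq Fqm v₁)
        = Module.finrank Fq
          ↥(Submodule.restrictScalars Fq (U : Submodule Fqr (Fin k → Fqm)) ⊓ perpQ Fq Fqm v₂) := by
  classical
  obtain ⟨U₀, hU₀s, hOeq⟩ := hO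
  obtain ⟨A, hAG, lam, hlam, hA⟩ := col_transitive G hk htrans v₁ v₂ hv₁ hv₂
  set ρ : Matrix (Fin k) (Fin k) Fqm → ((Fin k → Fqm) →ₗ[Fqr] (Fin k → Fqm)) :=
    fun M => (Matrix.vecMulLinear M).restrictScalars Fqr with hρ
  have hρcomp : ∀ (M N : Matrix (Fin k) (Fin k) Fqm) (U : Submodule Fqr (Fin k → Fqm)),
      (U.map (ρ M)).map (ρ N) = U.map (ρ (M * N)) := by
    intro M N U
    rw [← Submodule.map_comp]
    congr 1
    refine LinearMap.ext fun x => ?_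
    simp [ρ, Matrix.vecMul_vecMul]
  have hρone : ∀ U : Submodule Fqr (Fin k → Fqm), U.map (ρ 1) = U := by
    intro U
    have h1 : ρ 1 = LinearMap.id := by
      refine LinearMap.ext fun x => ?_
      simp [ρ]
    rw [h1, Submodule.map_id]
  have hAAinv : (A : Matrix (Fin k) (Fin k) Fqm) * ((A⁻¹ : Matrix.GeneralLinearGroup (Fin k) Fqm) :
      Matrix (Fin k) (Fin k) Fqm) = 1 := by
    rw [← Matrix.GeneralLinearGroup.coe_mul, mul_inv_cancel, Matrix.GeneralLinearGroup.coe_one]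
  have hAinvA : ((A⁻¹ : Matrix.GeneralLinearGroup (Fin k) Fqm) :
      Matrix (Fin k) (Fin k) Fqm) * (A : Matrix (Fin k) (Fin k) Fqm) = 1 := by
    rw [← Matrix.GeneralLinearGroup.coe_mul, inv_mul_cancel, Matrix.GeneralLinearGroup.coe_one]
  have hmemO : ∀ U ∈ O, U.map (ρ (A : Matrix (Fin k) (Fin k) Fqm)) ∈ O := by
    intro U hU
    rw [hOeq] at hU ⊢
    obtain ⟨B, hB, rfl⟩ := hU
    refine ⟨B * A, mul_mem hB hAG, ?_⟩
    rw [hρcomp, Matrix.GeneralLinearGroup.coe_mul]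
  have hmemO' : ∀ U ∈ O, U.map (ρ ((A⁻¹ : Matrix.GeneralLinearGroup (Fin k) Fqm) :
      Matrix (Fin k) (Fin k) Fqm)) ∈ O := by
    intro U hU
    rw [hOeq] at hU ⊢
    obtain ⟨B, hB, rfl⟩ := hU
    refine ⟨B * A⁻¹, mul_mem hB (inv_mem hAG), ?_⟩
    rw [hρcomp, Matrix.GeneralLinearGroup.coe_mul]
  -- the bijection
  refine ⟨⟨fun U => ⟨(U : Submodule Fqr (Fin k → Fqm)).map (ρ (A : Matrix (Fin k) (Fin k) Fqm)),
      hmemO _ U.2⟩,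
    fun U => ⟨(U : Submodule Fqr (Fin k → Fqm)).map
      (ρ ((A⁻¹ : Matrix.GeneralLinearGroup (Fin k) Fqm) : Matrix (Fin k) (Fin k) Fqm)),
      hmemO' _ U.2⟩, ?_, ?_⟩, ?_⟩
  · intro U
    apply Subtype.ext
    show ((U : Submodule Fqr (Fin k → Fqm)).map _).map _ = _
    rw [hρcomp, hAAinv, hρone]
  · intro U
    apply Subtype.ext
    show ((U : Submodule Fqr (Fin k → Fqm)).map _).map _ = _
    rw [hρcomp, hAinvA, hρone]
  -- dimension preservation
  intro U
  set e := vecMulEquivFq Fq A hAAinv hAinvA with he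
  have hkey : Submodule.restrictScalars Fq
        ((U : Submodule Fqr (Fin k → Fqm)).map (ρ (A : Matrix (Fin k) (Fin k) Fqm)))
        ⊓ perpQ Fq Fqm v₁
      = Submodule.map (e.toLinearMap)
        (Submodule.restrictScalars Fq (U : Submodule Fqr (Fin k → Fqm)) ⊓ perpQ Fq Fqm v₂) := by
    ext x
    simp only [Submodule.mem_inf, Submodule.mem_map, Submodule.restrictScalars_mem, perpQ,
      LinearMap.mem_ker, LinearEquiv.coe_coe, he, vecMulEquivFq_apply]
    constructor
    · rintro ⟨hx1, hx2⟩
      obtain ⟨u, hu, rfl⟩ := Submodule.mem_map.1 hx1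
      have hux : (ρ (A : Matrix (Fin k) (Fin k) Fqm)) u
          = Matrix.vecMul u (A : Matrix (Fin k) (Fin k) Fqm) := rfl
      rw [hux] at hx2 ⊢
      refine ⟨u, ⟨hu, ?_⟩, rfl⟩
      rw [dotL_vecMul, hA, dotL_smul_left] at hx2
      exact (mul_eq_zero.1 hx2).resolve_left hlam
    · rintro ⟨u, ⟨hu, hu2⟩, rfl⟩
      constructor
      · exact Submodule.mem_map.2 ⟨u, hu, rfl⟩
      · rw [dotL_vecMul, hA, dotL_smul_left, hu2, mul_zero]
  have hπU : ((⟨(U : Submodule Fqr (Fin k → Fqm)).map (ρ (A : Matrix (Fin k) (Fin k) Fqm)),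
      hmemO _ U.2⟩ : O) : Submodule Fqr (Fin k → Fqm))
      = (U : Submodule Fqr (Fin k → Fqm)).map (ρ (A : Matrix (Fin k) (Fin k) Fqm)) := rfl
  show Module.finrank Fq ↥(Submodule.restrictScalars Fq
      ((U : Submodule Fqr (Fin k → Fqm)).map (ρ (A : Matrix (Fin k) (Fin k) Fqm)))
      ⊓ perpQ Fq Fqm v₁) = _
  rw [hkey]
  exact LinearEquiv.finrank_map_eq e _
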